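/- With the extensional relation ⊑ on P(Flat_e(I)) defined via inversion indices, u ⊑ v holds if and only if for every u' ∈ [0,1]^{I∪{⊤}} with ∑ weights forming an element of the dual PCS and satisfying u'_i ≤ u'_⊤ for all i ∈ I, one has ⟨u, u'⟩ ≤ ⟨v, u'⟩. -/
import Mathlib

open scoped ENNReal

noncomputable section

def dot {I : Type*} (u v : I → ℝ≥0∞) : ℝ≥0∞ := ∑' i, u i * v i

def orth {I : Type*} (P : Set (I → ℝ≥0∞)) : Set (I → ℝ≥0∞) :=
  {v | ∀ u ∈ P, dot u v ≤ 1}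

/-- The Dirac mass at the error element `⊤` (encoded as `none`). -/
def eTop {I : Type*} : Option I → ℝ≥0∞ := fun x => x.elim 1 fun _ => 0

/-- Sub-probability distributions on `I` with an extra error point `⊤ = none`. -/
def Pflat (I : Type*) : Set (Option I → ℝ≥0∞) := {u | ∑' x, u x ≤ 1}

/-- The extensional preorder on `Pflat I`, defined via inversion indices:
`u ⊑ v` iff `u ⊤ + ∑_{i : u i > v i} u i ≤ v ⊤ + ∑_{i : u i > v i} v i`. -/
def extLE {I : Type*} (u v : Option I → ℝ≥0∞) : Prop :=
  u none + ∑' i : {i : I // v (some i) < u (some i)}, u (some i.1)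
    ≤ v none + ∑' i : {i : I // v (some i) < u (some i)}, v (some i.1)

lemma tsum_option_eq {I : Type*} (f : Option I → ℝ≥0∞) :
    ∑' x, f x = f none + ∑' i, f (some i) := by
  have hset : ({none} : Set (Option I))ᶜ = Set.range (some : I → Option I) := by
    ext x; cases x <;> simp
  rw [← Summable.tsum_add_tsum_compl (s := ({none} : Set (Option I)))
      ENNReal.summable ENNReal.summable, tsum_singleton,
    tsum_congr_set_coe f hset, tsum_range f (Option.some_injective I)]

theorem stmt12 {I : Type*} [Countable I]
    (u v : Option I → ℝ≥0∞) (hu : u ∈ Pflat I) (hv : v ∈ Pflat I) :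
    extLE u v ↔
      ∀ u' : Option I → ℝ≥0∞, (∀ x, u' x ≤ 1) → (∀ i : I, u' (some i) ≤ u' none) →
        dot u u' ≤ dot v u' := by
  classical
  set S : Set I := {i | v (some i) < u (some i)} with hSdef
  have hvfin : ∑' i : S, v (some i.1) ≠ ∞ := by
    refine ne_top_of_le_ne_top ENNReal.one_ne_top ?_
    calc ∑' i : S, v (some i.1)
        ≤ ∑' i : I, v (some i) := by
          rw [tsum_subtype S (fun i => v (some i))]
          exact ENNReal.tsum_le_tsum fun i => Set.indicator_le_self _ _ i
      _ ≤ ∑' x, v x := by rw [tsum_option_eq]; exact le_add_self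
      _ ≤ 1 := hv
  have hSsum : ∑' i : S, u (some i.1)
      = ∑' i : S, v (some i.1) + ∑' i : S, (u (some i.1) - v (some i.1)) := by
    rw [← ENNReal.tsum_add]
    exact tsum_congr fun i => (add_tsub_cancel_of_le i.2.le).symm
  constructor
  · intro h u' hb hmono
    set D : ℝ≥0∞ := ∑' i : S, (u (some i.1) - v (some i.1)) with hD
    have hkey : u none + D ≤ v none := by
      have h2 : extLE u v := h
      unfold extLE at h2
      have h3 : u none + (∑' i : S, v (some i.1) + D) ≤ v none + ∑' i : S, v (some i.1) := by
        rw [← hSsum]; exact h2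
      rw [← add_assoc, add_comm (u none) (∑' i : S, v (some i.1)), add_assoc,
        add_comm (v none)] at h3
      exact (ENNReal.add_le_add_iff_left hvfin).mp h3
    have hsplit : ∀ w : Option I → ℝ≥0∞, dot w u' =
        w none * u' none + (∑' i : S, w (some i.1) * u' (some i.1)
          + ∑' i : (Sᶜ : Set I), w (some i.1) * u' (some i.1)) := by
      intro w
      rw [dot, tsum_option_eq (fun x => w x * u' x),
        Summable.tsum_add_tsum_compl (f := fun i : I => w (some i) * u' (some i)) (s := S) ENNReal.summable ENNReal.summable]
    rw [hsplit u, hsplit v]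
    have hS1 : ∑' i : S, u (some i.1) * u' (some i.1)
        ≤ ∑' i : S, v (some i.1) * u' (some i.1) + D * u' none := by
      calc ∑' i : S, u (some i.1) * u' (some i.1)
          = ∑' i : S, (v (some i.1) * u' (some i.1)
              + (u (some i.1) - v (some i.1)) * u' (some i.1)) := by
            refine tsum_congr fun i => ?_
            rw [← add_mul, add_tsub_cancel_of_le i.2.le]
        _ = ∑' i : S, v (some i.1) * u' (some i.1)
              + ∑' i : S, (u (some i.1) - v (some i.1)) * u' (some i.1) := ENNReal.tsum_add
        _ ≤ ∑' i : S, v (some i.1) * u' (some i.1)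
              + ∑' i : S, (u (some i.1) - v (some i.1)) * u' none := by
            gcongr with i
            exact hmono i.1
        _ = ∑' i : S, v (some i.1) * u' (some i.1) + D * u' none := by
            rw [hD, ENNReal.tsum_mul_right]
    have hS2 : ∑' i : (Sᶜ : Set I), u (some i.1) * u' (some i.1)
        ≤ ∑' i : (Sᶜ : Set I), v (some i.1) * u' (some i.1) := by
      refine ENNReal.tsum_le_tsum fun i => ?_
      have : ¬ v (some i.1) < u (some i.1) := i.2
      exact mul_le_mul_left (not_lt.mp this) _
    calc u none * u' none + (∑' i : S, u (some i.1) * u' (some i.1)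
          + ∑' i : (Sᶜ : Set I), u (some i.1) * u' (some i.1))
        ≤ u none * u' none + ((∑' i : S, v (some i.1) * u' (some i.1) + D * u' none)
          + ∑' i : (Sᶜ : Set I), v (some i.1) * u' (some i.1)) := by gcongr
      _ = (u none + D) * u' none + (∑' i : S, v (some i.1) * u' (some i.1)
          + ∑' i : (Sᶜ : Set I), v (some i.1) * u' (some i.1)) := by ring
      _ ≤ v none * u' none + (∑' i : S, v (some i.1) * u' (some i.1)
          + ∑' i : (Sᶜ : Set I), v (some i.1) * u' (some i.1)) := by
          gcongr
  · intro h
    set u' : Option I → ℝ≥0∞ := fun x => x.elim 1 (fun i => if v (some i) < u (some i) then 1 else 0)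
      with hu'
    have hdot : ∀ w : Option I → ℝ≥0∞, dot w u' = w none + ∑' i : S, w (some i.1) := by
      intro w
      rw [dot, tsum_option_eq (fun x => w x * u' x)]
      simp only [hu', Option.elim, mul_one]
      congr 1
      rw [tsum_subtype S (fun i => w (some i))]
      refine tsum_congr fun i => ?_
      by_cases hi : v (some i) < u (some i) <;>
        simp [hi, Set.indicator, hSdef, Set.mem_setOf_eq]
    have := h u' (fun x => by cases x <;> simp [hu'] <;> split <;> simp)
      (fun i => by simp [hu'] ; split <;> simp)
    rw [hdot u, hdot v] at this
    exact this
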